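/- Let A be a Banach k-algebra over a complete nonarchimedean rank-1 valued field k with nontrivial valuation. For any open integrally closed k(1)-subalgebra A₀ ⊆ A, the adic closure A₀^{ac} = ⋂_{r>1} k(r)A₀ is again an open integrally closed k(1)-subalgebra of A. -/

import Mathlib

open Pointwise

/-!
STATEMENT 7: Let `A` be a Banach `k`-algebra over a complete nonarchimedean nontrivially
valued field `k` of rank 1.  For any open integrally closed `k(1)`-subalgebra `A₀ ⊆ A`,
the adic closure `A₀^{ac} = ⋂_{r>1} k(r)·A₀` is again an open integrally closed
`k(1)`-subalgebra of `A`.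

A `k(1)`-subalgebra is modelled as a subset containing `1`, closed under addition,
multiplication, negation and scalar multiplication by elements of `k(1)`; integrally closed
means every `a : A` which is a root of a monic polynomial with coefficients in the subset
belongs to the subset.
-/

def kball (k : Type*) [NormedField k] (r : ℝ) : Set k := {c | ‖c‖ ≤ r}

theorem stmt7 {k A : Type*} [NontriviallyNormedField k] [CompleteSpace k]
    [IsUltrametricDist k] [NormedCommRing A] [NormOneClass A] [IsUltrametricDist A]
    [NormedAlgebra k A] [CompleteSpace A]
    (A₀ : Set A)
    (h1 : (1 : A) ∈ A₀)
    (hadd : ∀ x ∈ A₀, ∀ y ∈ A₀, x + y ∈ A₀)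
    (hmul : ∀ x ∈ A₀, ∀ y ∈ A₀, x * y ∈ A₀)
    (hneg : ∀ x ∈ A₀, -x ∈ A₀)
    (hsmul : ∀ c ∈ kball k 1, ∀ x ∈ A₀, c • x ∈ A₀)
    (hopen : IsOpen A₀)
    (hic : ∀ a : A, (∃ p : Polynomial A, p.Monic ∧ (∀ i, p.coeff i ∈ A₀ ∪ {0}) ∧
        Polynomial.eval a p = 0) → a ∈ A₀) :
    (1 : A) ∈ (⋂ r ∈ Set.Ioi (1 : ℝ), kball k r • A₀) ∧
    (∀ x ∈ (⋂ r ∈ Set.Ioi (1 : ℝ), kball k r • A₀),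
      ∀ y ∈ (⋂ r ∈ Set.Ioi (1 : ℝ), kball k r • A₀),
        x + y ∈ (⋂ r ∈ Set.Ioi (1 : ℝ), kball k r • A₀) ∧
        x * y ∈ (⋂ r ∈ Set.Ioi (1 : ℝ), kball k r • A₀)) ∧
    (∀ x ∈ (⋂ r ∈ Set.Ioi (1 : ℝ), kball k r • A₀),
        -x ∈ (⋂ r ∈ Set.Ioi (1 : ℝ), kball k r • A₀)) ∧
    (∀ c ∈ kball k 1, ∀ x ∈ (⋂ r ∈ Set.Ioi (1 : ℝ), kball k r • A₀),
        c • x ∈ (⋂ r ∈ Set.Ioi (1 : ℝ), kball k r • A₀)) ∧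
    IsOpen (⋂ r ∈ Set.Ioi (1 : ℝ), kball k r • A₀) ∧
    (∀ a : A, (∃ p : Polynomial A, p.Monic ∧
        (∀ i, p.coeff i ∈ (⋂ r ∈ Set.Ioi (1 : ℝ), kball k r • A₀) ∪ {0}) ∧
        Polynomial.eval a p = 0) → a ∈ (⋂ r ∈ Set.Ioi (1 : ℝ), kball k r • A₀)) := by
  set B := (⋂ r ∈ Set.Ioi (1 : ℝ), kball k r • A₀) with hB
  have hmemB : ∀ x : A, x ∈ B ↔ ∀ r > (1:ℝ), x ∈ kball k r • A₀ := by
    intro x; simp [hB, Set.mem_iInter]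
  have h0A : (0 : A) ∈ A₀ := by
    have := hsmul 0 (by simp [kball]) 1 h1; simpa using this
  have hsub : A₀ ⊆ B := by
    intro x hx
    rw [hmemB]; intro r hr
    have h1r : (1 : k) ∈ kball k r := by simp [kball]; linarith
    simpa using Set.smul_mem_smul h1r hx
  -- closure of A₀ under scaling by ≤1 applied pointwise
  have hsmul' : ∀ c : k, ‖c‖ ≤ 1 → ∀ x ∈ A₀, c • x ∈ A₀ := fun c hc => hsmul c hc
  have hmemr : ∀ (r : ℝ) (x : A), x ∈ kball k r • A₀ ↔
      ∃ c : k, ‖c‖ ≤ r ∧ ∃ a ∈ A₀, c • a = x := by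
    intro r x
    constructor
    · rintro ⟨c, hc, a, ha, rfl⟩
      exact ⟨c, hc, a, ha, rfl⟩
    · rintro ⟨c, hc, a, ha, rfl⟩
      exact Set.smul_mem_smul hc ha
  -- addition closure at each level r
  have haddr : ∀ r > (1:ℝ), ∀ x ∈ kball k r • A₀, ∀ y ∈ kball k r • A₀,
      x + y ∈ kball k r • A₀ := by
    intro r hr x hx y hy
    rw [hmemr] at hx hy ⊢
    obtain ⟨c, hc, a, ha, rfl⟩ := hx
    obtain ⟨d, hd, b, hb, rfl⟩ := hy
    have key : ∀ (c d : k) (a b : A), ‖c‖ ≤ r → ‖d‖ ≤ r → a ∈ A₀ → b ∈ A₀ →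
        ‖c‖ ≤ ‖d‖ → ∃ e : k, ‖e‖ ≤ r ∧ ∃ z ∈ A₀, e • z = c • a + d • b := by
      intro c d a b hc hd ha hb hcd
      rcases eq_or_ne d 0 with rfl | hd0
      · have : c = 0 := by
          have : ‖c‖ = 0 := le_antisymm (by simpa using hcd) (norm_nonneg _)
          simpa using this
        subst this
        exact ⟨1, by linarith [norm_one (α := k)], 0, h0A, by simp⟩
      · refine ⟨d, hd, (c * d⁻¹) • a + b, hadd _ ?_ _ hb, ?_⟩
        · apply hsmul' _ ?_ _ ha
          rw [norm_mul, norm_inv]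
          have hdpos : 0 < ‖d‖ := norm_pos_iff.mpr hd0
          calc ‖c‖ * ‖d‖⁻¹ ≤ ‖d‖ * ‖d‖⁻¹ := by gcongr
            _ = 1 := mul_inv_cancel₀ (ne_of_gt hdpos)
        · rw [smul_add, smul_smul]
          congr 1
          rw [mul_comm d, mul_assoc, inv_mul_cancel₀ hd0, mul_one]
    rcases le_total ‖c‖ ‖d‖ with h | h
    · exact key c d a b hc hd ha hb h
    · obtain ⟨e, he, z, hz, hze⟩ := key d c b a hd hc hb ha h
      exact ⟨e, he, z, hz, by rw [hze]; ring⟩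
  have haddB : ∀ x ∈ B, ∀ y ∈ B, x + y ∈ B := by
    intro x hx y hy
    rw [hmemB] at *
    intro r hr
    exact haddr r hr x (hx r hr) y (hy r hr)
  refine ⟨hsub h1, ?_, ?_, ?_, ?_, ?_⟩
  · -- add and mul
    intro x hx y hy
    refine ⟨haddB x hx y hy, ?_⟩
    rw [hmemB] at *
    intro r hr
    have hs : (1:ℝ) < Real.sqrt r := by
      rw [show (1:ℝ) = Real.sqrt 1 by simp]
      exact Real.sqrt_lt_sqrt (by norm_num) hr
    obtain ⟨c, hc, a, ha, rfl⟩ := (hmemr _ _).mp (hx _ hs)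
    obtain ⟨d, hd, b, hb, rfl⟩ := (hmemr _ _).mp (hy _ hs)
    rw [hmemr]
    refine ⟨c * d, ?_, a * b, hmul _ ha _ hb, ?_⟩
    · rw [norm_mul]
      calc ‖c‖ * ‖d‖ ≤ Real.sqrt r * Real.sqrt r := by
            have := norm_nonneg c; have := norm_nonneg d; nlinarith
        _ = r := Real.mul_self_sqrt (by linarith)
    · rw [smul_mul_smul_comm]
  · -- neg
    intro x hx
    rw [hmemB] at *
    intro r hr
    obtain ⟨c, hc, a, ha, rfl⟩ := (hmemr _ _).mp (hx _ hr)
    exact (hmemr _ _).mpr ⟨c, hc, -a, hneg _ ha, by simp⟩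
  · -- smul
    intro c hc x hx
    rw [hmemB] at *
    intro r hr
    obtain ⟨d, hd, a, ha, rfl⟩ := (hmemr _ _).mp (hx _ hr)
    refine (hmemr _ _).mpr ⟨c * d, ?_, a, ha, by rw [smul_smul]⟩
    rw [norm_mul]
    calc ‖c‖ * ‖d‖ ≤ 1 * r := by
          have := norm_nonneg d
          exact mul_le_mul hc hd this zero_le_one
      _ = r := one_mul r
  · -- open
    have : B = B + A₀ := by
      apply Set.Subset.antisymm
      · intro x hx
        exact ⟨x, hx, 0, h0A, by simp⟩
      · rintro _ ⟨x, hx, a, ha, rfl⟩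
        exact haddB x hx a (hsub ha)
    rw [this]
    exact hopen.add_left
  · -- integrally closed
    rintro a ⟨p, hp, hcoef, heval⟩
    rw [hmemB]
    intro r hr
    by_cases hex : ∃ t : k, t ≠ 0 ∧ r⁻¹ ≤ ‖t‖ ∧ ‖t‖ < 1
    · obtain ⟨t, ht0, htr, ht1⟩ := hex
      have htpos : 0 < ‖t‖ := norm_pos_iff.mpr ht0
      set s := (algebraMap k A) t with hs
      set q := p.scaleRoots s with hq
      have hqmonic : q.Monic := (Polynomial.monic_scaleRoots_iff s).mpr hp
      have hqcoef : ∀ i, q.coeff i ∈ A₀ ∪ {0} := by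
        intro i
        rw [hq, Polynomial.coeff_scaleRoots]
        rcases lt_trichotomy i p.natDegree with hi | hi | hi
        · rcases hcoef i with hci | hci
          · left
            rw [hmemB] at hci
            have h2 : (1:ℝ) < ‖t‖⁻¹ := by
              rw [lt_inv_comm₀ one_pos htpos]; simpa using ht1
            obtain ⟨c, hc, x, hx, hcx⟩ := (hmemr _ _).mp (hci _ h2)
            have : s ^ (p.natDegree - i) * p.coeff i = (t ^ (p.natDegree - i) * c) • x := by
              rw [← hcx, hs, Algebra.smul_def, Algebra.smul_def, map_mul, map_pow, ← mul_assoc]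
            rw [mul_comm, this]
            apply hsmul' _ ?_ _ hx
            rw [norm_mul, norm_pow]
            have h3 : ‖t‖ ^ (p.natDegree - i) ≤ ‖t‖ := by
              have : 1 ≤ p.natDegree - i := by omega
              calc ‖t‖ ^ (p.natDegree - i) ≤ ‖t‖ ^ 1 :=
                    pow_le_pow_of_le_one (le_of_lt htpos) (le_of_lt ht1) this
                _ = ‖t‖ := pow_one _
            calc ‖t‖ ^ (p.natDegree - i) * ‖c‖ ≤ ‖t‖ * ‖t‖⁻¹ := by
                  apply mul_le_mul h3 hc (norm_nonneg _) (le_of_lt htpos)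
              _ = 1 := mul_inv_cancel₀ (ne_of_gt htpos)
          · right; simp only [Set.mem_singleton_iff] at hci ⊢; rw [hci, zero_mul]
        · left
          rw [hi, tsub_self, pow_zero, mul_one]
          have : p.coeff p.natDegree = 1 := hp
          rw [this]; exact h1
        · right
          have : p.coeff i = 0 := Polynomial.coeff_eq_zero_of_natDegree_lt hi
          simp [this]
      have hqroot : Polynomial.eval (s * a) q = 0 := by
        rw [hq]
        have h' : Polynomial.eval₂ (RingHom.id A) a p = 0 := heval
        have h2 := Polynomial.scaleRoots_eval₂_eq_zero (RingHom.id A) (s := s) h'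
        exact h2
      have hta : s * a ∈ A₀ := hic _ ⟨q, hqmonic, hqcoef, hqroot⟩
      rw [hmemr]
      refine ⟨t⁻¹, ?_, s * a, hta, ?_⟩
      · rw [norm_inv]
        calc ‖t‖⁻¹ ≤ (r⁻¹)⁻¹ := inv_anti₀ (by positivity) htr
          _ = r := inv_inv r
      · rw [hs, ← Algebra.smul_def, smul_smul, inv_mul_cancel₀ ht0, one_smul]
    · -- kball r ⊆ kball 1, so B ⊆ A₀ at this level
      push_neg at hex
      have hball : kball k r ⊆ kball k 1 := by
        intro c hc
        by_contra hc1
        simp only [kball, Set.mem_setOf_eq, not_le] at hc1 hc ⊢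
        have hc0 : c ≠ 0 := by
          intro h; rw [h, norm_zero] at hc1; linarith
        have h1 : ‖c⁻¹‖ < 1 := by
          rw [norm_inv, inv_lt_one₀ (by linarith)]; exact hc1
        have h2 : r⁻¹ ≤ ‖c⁻¹‖ := by
          rw [norm_inv]
          exact inv_anti₀ (by linarith) hc
        exact absurd h1 (not_lt.mpr (hex c⁻¹ (inv_ne_zero hc0) h2))
      have hBA : ∀ x ∈ B, x ∈ A₀ := by
        intro x hx
        rw [hmemB] at hx
        obtain ⟨c, hc, z, hz, rfl⟩ := (hmemr _ _).mp (hx r hr)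
        exact hsmul' c (hball hc) z hz
      have hcoef' : ∀ i, p.coeff i ∈ A₀ ∪ {0} := by
        intro i
        rcases hcoef i with h | h
        · exact Or.inl (hBA _ h)
        · exact Or.inr h
      have := hic a ⟨p, hp, hcoef', heval⟩
      exact (hmemr _ _).mpr ⟨1, by simpa using le_of_lt hr, a, this, one_smul _ _⟩
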